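/- arXiv:1712.02676 — 5 statements merged into one kernel-verified Lean document; each statement's English description precedes it below -/
import Mathlib

section
/- Let G be an r-regular graph on n vertices where r is odd and n ≡ 2 (mod 4). Then there does not exist an orientation of G together with a bijection l : V(G) → Z_n such that for every vertex x, the sum of l(y) over out-neighbors y of x minus the sum of l(y) over in-neighbors y of x equals a fixed constant μ ∈ Z_n. -/
open Finset

/-- An orientation of `G` together with a bijective labeling by `ZMod n` whose
vertex weights (sum of labels of out-neighbors minus sum of labels of in-neighbors)
are all equal to some constant `μ`. -/
def orientableDistanceMagic {V : Type*} [Fintype V] [DecidableEq V]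
    (G : SimpleGraph V) (n : ℕ) : Prop :=
  ∃ (D : V → V → Bool) (l : V → ZMod n) (μ : ZMod n),
    Function.Bijective l ∧
    (∀ x y, D x y → G.Adj x y) ∧
    (∀ x y, G.Adj x y → (D x y ↔ ¬ D y x)) ∧
    ∀ x : V, (∑ y ∈ univ.filter (fun y => D x y), l y)
           - (∑ y ∈ univ.filter (fun y => D y x), l y) = μ

lemma gauss2 (n : ℕ) (hn : n % 4 = 2) : ∑ i ∈ range n, (i : ZMod 2) = 1 := by
  have h : ∑ i ∈ range n, (i : ZMod 2) = ((∑ i ∈ range n, i : ℕ) : ZMod 2) := by push_cast; ring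
  rw [h]
  have h2 : (∑ i ∈ range n, i) * 2 = n * (n - 1) := Finset.sum_range_id_mul_two n
  have hs : (∑ i ∈ range n, i) % 2 = 1 := by
    obtain ⟨k, hk⟩ : ∃ k, n = 4 * k + 2 := ⟨n / 4, by omega⟩
    subst hk
    have hnn : (4*k+2) * (4*k+2-1) = 2 * ((2*k+1)*(4*k+1)) := by
      have : 4*k+2-1 = 4*k+1 := by omega
      rw [this]; ring
    rw [hnn] at h2
    have h3 : (∑ i ∈ range (4*k+2), i) = (2*k+1) * (4*k+1) := by omega
    have : Odd ((2*k+1)*(4*k+1)) := Odd.mul ⟨k, by ring⟩ ⟨2*k, by ring⟩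
    rcases this with ⟨t, ht⟩
    omega
  calc ((∑ i ∈ range n, i : ℕ) : ZMod 2) = (((∑ i ∈ range n, i) % 2 : ℕ) : ZMod 2) := by
        rw [ZMod.natCast_mod]
    _ = 1 := by rw [hs]; norm_num

theorem stmt_0 {V : Type*} [Fintype V] [DecidableEq V] (G : SimpleGraph V)
    [DecidableRel G.Adj] (n r : ℕ) (hcard : Fintype.card V = n)
    (hreg : G.IsRegularOfDegree r) (hr : Odd r) (hn : n % 4 = 2) :
    ¬ orientableDistanceMagic G n := by
  rintro ⟨D, l, μ, hbij, hDadj, hDanti, hw⟩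
  have hn0 : 0 < n := by omega
  haveI : NeZero n := ⟨hn0.ne'⟩
  have h2n : (2:ℕ) ∣ n := by omega
  let φ : ZMod n →+* ZMod 2 := ZMod.castHom h2n (ZMod 2)
  set f : V → ZMod 2 := fun y => φ (l y) with hf
  -- per-vertex: sum of f over neighbors is φ μ
  have key : ∀ x : V, ∑ y ∈ G.neighborFinset x, f y = φ μ := by
    intro x
    have hpart : G.neighborFinset x
        = univ.filter (fun y => D x y) ∪ univ.filter (fun y => D y x) := by
      ext y
      simp only [SimpleGraph.mem_neighborFinset, Finset.mem_union, Finset.mem_filter,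
        Finset.mem_univ, true_and]
      constructor
      · intro hadj
        by_cases h : D x y = true
        · exact Or.inl h
        · exact Or.inr (by
            have := (hDanti x y hadj)
            by_contra h2
            exact ((this.2 (by simpa using h2)) |> fun hh => h hh))
      · rintro (h | h)
        · exact hDadj x y h
        · exact (hDadj y x h).symm
    have hdisj : Disjoint (univ.filter (fun y => D x y = true))
        (univ.filter (fun y => D y x = true)) := by
      rw [Finset.disjoint_left]
      intro a ha hb
      simp only [Finset.mem_filter] at ha hb
      have hadj := hDadj x a ha.2
      exact ((hDanti x a hadj).1 ha.2) hb.2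
    have hφ := congrArg φ (hw x)
    rw [map_sub, map_sum, map_sum] at hφ
    rw [hpart, Finset.sum_union hdisj]
    rw [CharTwo.sub_eq_add] at hφ
    exact hφ
  -- sum of f over all vertices is 1
  have hsumf : ∑ y : V, f y = 1 := by
    have h1 : ∑ y : V, f y = ∑ z : ZMod n, φ z :=
      Fintype.sum_bijective l hbij _ _ (fun x => rfl)
    have h2 : ∀ z : ZMod n, φ z = ((z.val : ℕ) : ZMod 2) := by
      intro z
      rw [ZMod.castHom_apply, ← ZMod.natCast_val]
    have h3 : ∑ z : ZMod n, φ z = ∑ i ∈ range n, (i : ZMod 2) := by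
      simp_rw [h2]
      rw [Finset.sum_bij (fun (z : ZMod n) _ => z.val)]
      · intro a _; exact mem_range.2 (ZMod.val_lt a)
      · intro a _ b _ h; exact ZMod.val_injective n h
      · intro b hb; exact ⟨(b : ZMod n), mem_univ _, (ZMod.val_cast_of_lt (mem_range.1 hb))⟩
      · intro a _; rfl
    rw [h1, h3, gauss2 n hn]
  -- double counting
  have hswap : ∑ x : V, ∑ y ∈ G.neighborFinset x, f y = ∑ y : V, (r : ZMod 2) * f y := by
    have : ∀ x : V, ∑ y ∈ G.neighborFinset x, f y
        = ∑ y : V, if G.Adj x y then f y else 0 := by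
      intro x
      rw [SimpleGraph.neighborFinset_eq_filter, Finset.sum_filter]
    simp_rw [this]
    rw [Finset.sum_comm]
    congr 1
    ext y
    have : ∑ x : V, (if G.Adj x y then f y else 0)
        = ∑ x ∈ univ.filter (fun x => G.Adj x y), f y := (Finset.sum_filter _ _).symm
    rw [this, Finset.sum_const]
    have hc : (univ.filter (fun x => G.Adj x y)).card = r := by
      have : univ.filter (fun x => G.Adj x y) = G.neighborFinset y := by
        ext x
        simp [SimpleGraph.mem_neighborFinset, G.adj_comm]
      rw [this]
      exact hreg y
    rw [hc, nsmul_eq_mul]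
  -- conclude
  have hL : ∑ x : V, ∑ y ∈ G.neighborFinset x, f y = 0 := by
    simp_rw [key]
    rw [Finset.sum_const, Finset.card_univ, hcard, nsmul_eq_mul]
    have : (n : ZMod 2) = 0 := by
      rw [ZMod.natCast_eq_zero_iff]
      exact h2n
    rw [this, zero_mul]
  rw [hswap, ← Finset.mul_sum, hsumf, mul_one] at hL
  have : (r : ZMod 2) = 1 := by
    have hr2 : r % 2 = 1 := Nat.odd_iff.1 hr
    calc (r : ZMod 2) = ((r % 2 : ℕ) : ZMod 2) := (ZMod.natCast_mod r 2).symm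
      _ = 1 := by rw [hr2]; norm_num
  rw [this] at hL
  exact one_ne_zero hL
end

section
/- The complete graph K_n is orientable Z_n-distance magic if and only if n is odd. -/
open Finset

theorem stmt_1 (n : ℕ) (hn : 1 ≤ n) :
    orientableDistanceMagic (⊤ : SimpleGraph (Fin n)) n ↔ Odd n := by
  have hnz : NeZero n := ⟨by omega⟩
  constructor
  · rintro ⟨D, l, μ, ⟨linj, lsurj⟩, hadj, htour, hw⟩
    by_contra hodd
    have heven : 2 ∣ n := (Nat.not_odd_iff_even.1 hodd).two_dvd
    set S : ZMod n := ∑ y : Fin n, l y with hS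
    have key : ∀ x : Fin n,
        2 * (∑ y ∈ univ.filter (fun y => D x y), l y) = μ + S - l x := by
      intro x
      set A := univ.filter (fun y => D x y) with hA
      set B := univ.filter (fun y => D y x) with hB
      have hdisj : Disjoint A B := by
        rw [Finset.disjoint_left]
        intro y hyA hyB
        simp only [hA, hB, mem_filter, mem_univ, true_and] at hyA hyB
        exact (htour x y (hadj x y hyA)).1 hyA hyB
      have hunion : A ∪ B = univ.erase x := by
        ext y
        simp only [hA, hB, mem_union, mem_filter, mem_univ, true_and, mem_erase, and_true]
        constructor
        · rintro (h | h)
          · exact (hadj x y h).symm.ne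
          · exact (hadj y x h).ne
        · intro hne
          by_cases hD : D x y
          · exact Or.inl hD
          · have hadj' : (⊤ : SimpleGraph (Fin n)).Adj y x := by simp [hne]
            exact Or.inr ((htour y x hadj').2 hD)
      have hsum : (∑ y ∈ A, l y) + (∑ y ∈ B, l y) = S - l x := by
        rw [← Finset.sum_union hdisj, hunion, hS]
        have := Finset.sum_erase_add univ l (mem_univ x)
        linear_combination this
      have hw' := hw x
      rw [← hA, ← hB] at hw'
      linear_combination hsum + hw'
    obtain ⟨x, hx⟩ := lsurj (μ + S - 1)
    have h1 : 2 * (∑ y ∈ univ.filter (fun y => D x y), l y) = 1 := by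
      rw [key x, hx]; ring
    have h2 := congrArg (ZMod.castHom heven (ZMod 2)) h1
    rw [map_mul, map_one] at h2
    have h3 : (ZMod.castHom heven (ZMod 2)) (2 : ZMod n) = 0 := by
      have : ((2 : ℕ) : ZMod n) = (2 : ZMod n) := by push_cast; ring
      rw [← this, map_natCast]; decide
    rw [h3, zero_mul] at h2
    exact one_ne_zero h2.symm
  · rintro ⟨m, hm⟩
    set l : Fin n → ZMod n := fun i => ((i : ℕ) : ZMod n) with hl
    have lbij : Function.Bijective l := by
      constructor
      · intro a b hab
        have ha := ZMod.val_cast_of_lt (n := n) a.isLt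
        have hb := ZMod.val_cast_of_lt (n := n) b.isLt
        have h : ((a : ℕ) : ZMod n).val = ((b : ℕ) : ZMod n).val := by
          simp only [hl] at hab; rw [hab]
        rw [ha, hb] at h
        exact Fin.ext h
      · intro z
        exact ⟨⟨z.val, z.val_lt⟩, ZMod.natCast_rightInverse z⟩
    set D : Fin n → Fin n → Bool := fun i j =>
      decide (1 ≤ (l j - l i).val ∧ (l j - l i).val ≤ m) with hD
    have hDiff : ∀ x y : Fin n, D x y ↔ (1 ≤ (l y - l x).val ∧ (l y - l x).val ≤ m) := by
      intro x y; simp [hD]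
    have hDne : ∀ x y : Fin n, D x y → x ≠ y := by
      intro x y h hxy
      subst hxy
      rw [hDiff] at h
      simp at h
    have hvne : ∀ x y : Fin n, x ≠ y → 1 ≤ (l y - l x).val ∧ (l y - l x).val < n := by
      intro x y hxy
      have h0 : l y - l x ≠ 0 := fun h =>
        hxy (lbij.1 (by linear_combination h)).symm
      refine ⟨?_, ZMod.val_lt _⟩
      have := (ZMod.val_eq_zero (l y - l x)).not.2 h0
      omega
    -- the set of "forward steps"
    set T : Finset (ZMod n) := univ.filter (fun w => 1 ≤ w.val ∧ w.val ≤ m) with hT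
    set c : ZMod n := ∑ w ∈ T, w with hc
    refine ⟨D, l, c + c, lbij, fun x y h => by simpa using (hDne x y h), ?_, ?_⟩
    · -- tournament property
      intro x y hadj
      rw [SimpleGraph.top_adj] at hadj
      rw [hDiff, hDiff]
      have h1 := hvne x y hadj
      have h2 := hvne y x hadj.symm
      have hneg : l x - l y = -(l y - l x) := by ring
      have : (l x - l y).val = n - (l y - l x).val := by
        rw [hneg, ZMod.neg_val, if_neg]
        intro h
        have := (ZMod.val_eq_zero (l y - l x)).2 h
        omega
      rw [this]
      constructor
      · rintro ⟨ha, hb⟩; omega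
      · intro h; omega
    · -- weight
      intro x
      have hout : (∑ y ∈ univ.filter (fun y => D x y), l y) = T.card • l x + c := by
        rw [show (∑ y ∈ univ.filter (fun y => D x y), l y) = ∑ w ∈ T, (l x + w) from ?_]
        · rw [Finset.sum_add_distrib, Finset.sum_const, hc]
        · refine Finset.sum_nbij' (fun y => l y - l x)
            (fun w => ⟨(l x + w).val, ZMod.val_lt _⟩) ?_ ?_ ?_ ?_ ?_
          · intro a ha
            simp only [mem_filter, mem_univ, true_and] at ha
            rw [hDiff] at ha
            simp only [hT, mem_filter, mem_univ, true_and]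
            exact ha
          · intro w hw
            simp only [hT, mem_filter, mem_univ, true_and] at hw
            simp only [mem_filter, mem_univ, true_and]
            rw [hDiff]
            have : l ⟨(l x + w).val, ZMod.val_lt _⟩ = l x + w := by
              simp only [hl]
              exact ZMod.natCast_rightInverse _
            rw [this, add_sub_cancel_left]
            exact hw
          · intro a _
            apply lbij.1
            have : l ⟨(l x + (l a - l x)).val, ZMod.val_lt _⟩ = l x + (l a - l x) := by
              simp only [hl]; exact ZMod.natCast_rightInverse _
            rw [this]; ring
          · intro w _
            have : l ⟨(l x + w).val, ZMod.val_lt _⟩ = l x + w := by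
              simp only [hl]; exact ZMod.natCast_rightInverse _
            beta_reduce; rw [this]; ring
          · intro a _
            have : l ⟨(l x + (l a - l x)).val, ZMod.val_lt _⟩ = l x + (l a - l x) := by
              simp only [hl]; exact ZMod.natCast_rightInverse _
            ring
      have hin : (∑ y ∈ univ.filter (fun y => D y x), l y) = T.card • l x - c := by
        rw [show (∑ y ∈ univ.filter (fun y => D y x), l y) = ∑ w ∈ T, (l x - w) from ?_]
        · rw [Finset.sum_sub_distrib, Finset.sum_const, hc]
        · refine Finset.sum_nbij' (fun y => l x - l y)
            (fun w => ⟨(l x - w).val, ZMod.val_lt _⟩) ?_ ?_ ?_ ?_ ?_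
          · intro a ha
            simp only [mem_filter, mem_univ, true_and] at ha
            rw [hDiff] at ha
            simp only [hT, mem_filter, mem_univ, true_and]
            exact ha
          · intro w hw
            simp only [hT, mem_filter, mem_univ, true_and] at hw
            simp only [mem_filter, mem_univ, true_and]
            rw [hDiff]
            have : l ⟨(l x - w).val, ZMod.val_lt _⟩ = l x - w := by
              simp only [hl]; exact ZMod.natCast_rightInverse _
            rw [this, sub_sub_cancel]
            exact hw
          · intro a _
            apply lbij.1
            have : l ⟨(l x - (l x - l a)).val, ZMod.val_lt _⟩ = l x - (l x - l a) := by
              simp only [hl]; exact ZMod.natCast_rightInverse _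
            rw [this]; ring
          · intro w _
            have : l ⟨(l x - w).val, ZMod.val_lt _⟩ = l x - w := by
              simp only [hl]; exact ZMod.natCast_rightInverse _
            beta_reduce; rw [this]; ring
          · intro a _
            have : l ⟨(l x - (l x - l a)).val, ZMod.val_lt _⟩ = l x - (l x - l a) := by
              simp only [hl]; exact ZMod.natCast_rightInverse _
            ring
      rw [hout, hin]
      ring
end

section
/- Let n be a positive even integer and let n = r_1 + r_2 + ... + r_q be a partition with each r_i ≥ 2. Let A = {−n/2, −(n/2−1), ..., −1, 1, ..., n/2−1, n/2} ⊆ ℤ. Then A can be partitioned into pairwise disjoint subsets A_1, ..., A_q with |A_i| = r_i and Σ_{a∈A_i} a = 0 for every i. -/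
open Finset

/-- pairs ±x for x ∈ [a,b] -/
noncomputable def pairSet (a b : ℕ) : Finset ℤ :=
  (Finset.Icc (a : ℤ) (b : ℤ)) ∪ (Finset.Icc (-(b : ℤ)) (-(a : ℤ)))

lemma mem_pairSet {a b : ℕ} {x : ℤ} :
    x ∈ pairSet a b ↔ ((a : ℤ) ≤ x ∧ x ≤ (b : ℤ)) ∨ (-(b : ℤ) ≤ x ∧ x ≤ -(a : ℤ)) := by
  simp [pairSet, Finset.mem_Icc]

lemma pairSet_card {a b : ℕ} (ha : 1 ≤ a) : (pairSet a b).card = 2 * (b + 1 - a) := by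
  rcases le_or_gt a b with h | h
  · rw [pairSet, Finset.card_union_of_disjoint]
    · rw [Int.card_Icc, Int.card_Icc]; omega
    · rw [Finset.disjoint_left]
      intro x hx hx'
      simp only [Finset.mem_Icc] at hx hx'
      omega
  · rw [pairSet, Finset.Icc_eq_empty (by exact_mod_cast by omega),
      Finset.Icc_eq_empty (by omega)]
    simp; omega

lemma pairSet_sum {a b : ℕ} (ha : 1 ≤ a) : ∑ x ∈ pairSet a b, x = 0 := by
  have himg : Finset.Icc (-(b : ℤ)) (-(a : ℤ)) = (Finset.Icc (a : ℤ) (b : ℤ)).image (fun x => -x) := by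
    ext x
    simp only [Finset.mem_Icc, Finset.mem_image]
    constructor
    · intro h; exact ⟨-x, ⟨by omega, by omega⟩, by ring⟩
    · rintro ⟨y, hy, rfl⟩; omega
  have hdisj : Disjoint (Finset.Icc (a : ℤ) (b : ℤ)) (Finset.Icc (-(b : ℤ)) (-(a : ℤ))) := by
    rw [Finset.disjoint_left]
    intro x hx hx'
    simp only [Finset.mem_Icc] at hx hx'
    omega
  rw [pairSet, Finset.sum_union hdisj, himg,
    Finset.sum_image (by intro x _ y _ h; exact neg_inj.mp h)]
  rw [← Finset.sum_add_distrib]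
  simp

/-- the j-th zero-sum triple in the family covering ±{1..3t}, 0 ≤ j < 2t -/
def tr (t j : ℕ) : Finset ℤ :=
  if j % 2 = 0 then
    {((j / 2 : ℕ) : ℤ) + 1, (t : ℤ) + ((j / 2 : ℕ) : ℤ) + 1, -((t : ℤ) + 2 * ((j / 2 : ℕ) : ℤ) + 2)}
  else
    {2 * (t : ℤ) + ((j / 2 : ℕ) : ℤ) + 1, -((t : ℤ) - ((j / 2 : ℕ) : ℤ)), -((t : ℤ) + 2 * ((j / 2 : ℕ) : ℤ) + 1)}

lemma mem_tr {t j : ℕ} {x : ℤ} : x ∈ tr t j ↔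
    (j % 2 = 0 ∧ (x = ((j / 2 : ℕ) : ℤ) + 1 ∨ x = (t : ℤ) + ((j / 2 : ℕ) : ℤ) + 1 ∨
      x = -((t : ℤ) + 2 * ((j / 2 : ℕ) : ℤ) + 2))) ∨
    (j % 2 = 1 ∧ (x = 2 * (t : ℤ) + ((j / 2 : ℕ) : ℤ) + 1 ∨ x = -((t : ℤ) - ((j / 2 : ℕ) : ℤ)) ∨
      x = -((t : ℤ) + 2 * ((j / 2 : ℕ) : ℤ) + 1))) := by
  unfold tr
  split
  · rename_i h
    simp only [Finset.mem_insert, Finset.mem_singleton]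
    constructor
    · intro hx; exact Or.inl ⟨h, hx⟩
    · rintro (⟨_, hx⟩ | ⟨h1, _⟩); exact hx; omega
  · rename_i h
    simp only [Finset.mem_insert, Finset.mem_singleton]
    constructor
    · intro hx; exact Or.inr ⟨by omega, hx⟩
    · rintro (⟨h1, _⟩ | ⟨_, hx⟩); omega; exact hx

lemma tr_bounds {t j : ℕ} (hj : j < 2 * t) {x : ℤ} (hx : x ∈ tr t j) :
    x ≠ 0 ∧ -(3 * (t : ℤ)) ≤ x ∧ x ≤ 3 * (t : ℤ) := by
  rw [mem_tr] at hx; omega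

lemma tr_inj {t j j' : ℕ} (hj : j < 2 * t) (hj' : j' < 2 * t) {x : ℤ}
    (hx : x ∈ tr t j) (hx' : x ∈ tr t j') : j = j' := by
  rw [mem_tr] at hx hx'; omega

lemma tr_card {t j : ℕ} (hj : j < 2 * t) : (tr t j).card = 3 := by
  unfold tr
  split <;> rename_i h <;>
    rw [Finset.card_insert_of_notMem (by simp; omega),
      Finset.card_insert_of_notMem (by simp; omega), Finset.card_singleton]

lemma tr_sum {t j : ℕ} (hj : j < 2 * t) : ∑ x ∈ tr t j, x = 0 := by
  unfold tr
  split <;> rename_i h <;>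
    rw [Finset.sum_insert (by simp; omega), Finset.sum_insert (by simp; omega),
      Finset.sum_singleton] <;> ring

def pcf (f : ℕ → ℕ) (k : ℕ) : ℕ := if f k % 2 = 0 then f k / 2 else (f k - 3) / 2
def bitf (f : ℕ → ℕ) (k : ℕ) : ℕ := f k % 2
def OOf (f : ℕ → ℕ) (k : ℕ) : ℕ := ∑ j ∈ Finset.range k, pcf f j
def oif (f : ℕ → ℕ) (k : ℕ) : ℕ := ∑ j ∈ Finset.range k, bitf f j

lemma pcf_bitf {f : ℕ → ℕ} {k : ℕ} (h : 2 ≤ f k) : 2 * pcf f k + 3 * bitf f k = f k := by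
  unfold pcf bitf; split <;> omega

lemma OOf_mono {f : ℕ → ℕ} {k l : ℕ} (h : k < l) : OOf f k + pcf f k ≤ OOf f l := by
  unfold OOf
  calc ∑ j ∈ Finset.range k, pcf f j + pcf f k = ∑ j ∈ Finset.range (k+1), pcf f j := by
        rw [Finset.sum_range_succ]
    _ ≤ ∑ j ∈ Finset.range l, pcf f j := by
        apply Finset.sum_le_sum_of_subset
        exact Finset.range_subset_range.2 (by omega)

lemma oif_mono {f : ℕ → ℕ} {k l : ℕ} (h : k < l) : oif f k + bitf f k ≤ oif f l := by
  unfold oif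
  calc ∑ j ∈ Finset.range k, bitf f j + bitf f k = ∑ j ∈ Finset.range (k+1), bitf f j := by
        rw [Finset.sum_range_succ]
    _ ≤ ∑ j ∈ Finset.range l, bitf f j := by
        apply Finset.sum_le_sum_of_subset
        exact Finset.range_subset_range.2 (by omega)

lemma sum_decomp {f : ℕ → ℕ} {q : ℕ} (h2 : ∀ j < q, 2 ≤ f j) :
    ∑ j ∈ Finset.range q, f j = 2 * OOf f q + 3 * oif f q := by
  unfold OOf oif
  rw [Finset.mul_sum, Finset.mul_sum, ← Finset.sum_add_distrib]
  apply Finset.sum_congr rfl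
  intro j hj
  have := pcf_bitf (f := f) (k := j) (h2 j (Finset.mem_range.1 hj))
  omega
noncomputable def BB (f : ℕ → ℕ) (t k : ℕ) : Finset ℤ :=
  pairSet (3 * t + OOf f k + 1) (3 * t + OOf f k + pcf f k) ∪
    (if bitf f k = 1 then tr t (oif f k) else ∅)

lemma mem_BB {f : ℕ → ℕ} {t k : ℕ} {x : ℤ} :
    x ∈ BB f t k ↔ x ∈ pairSet (3 * t + OOf f k + 1) (3 * t + OOf f k + pcf f k) ∨
      (bitf f k = 1 ∧ x ∈ tr t (oif f k)) := by
  unfold BB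
  rw [Finset.mem_union]
  split <;> rename_i h <;> simp [h]

lemma BB_card {f : ℕ → ℕ} {t k : ℕ} (ho : bitf f k = 1 → oif f k < 2 * t) :
    (BB f t k).card = 2 * pcf f k + 3 * bitf f k := by
  unfold BB
  by_cases h : bitf f k = 1
  · rw [if_pos h, Finset.card_union_of_disjoint, pairSet_card (by omega), tr_card (ho h), h]
    · omega
    · rw [Finset.disjoint_left]
      intro x hx hx'
      rw [mem_pairSet] at hx
      have := tr_bounds (ho h) hx'
      push_cast at hx
      omega
  · rw [if_neg h, Finset.union_empty, pairSet_card (by omega)]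
    have : bitf f k = 0 := by unfold bitf at *; omega
    omega

lemma BB_sum {f : ℕ → ℕ} {t k : ℕ} (ho : bitf f k = 1 → oif f k < 2 * t) :
    ∑ x ∈ BB f t k, x = 0 := by
  unfold BB
  by_cases h : bitf f k = 1
  · have hdisj : Disjoint (pairSet (3 * t + OOf f k + 1) (3 * t + OOf f k + pcf f k))
        (tr t (oif f k)) := by
      rw [Finset.disjoint_left]
      intro x hx hx'
      rw [mem_pairSet] at hx
      have := tr_bounds (ho h) hx'
      push_cast at hx
      omega
    rw [if_pos h, Finset.sum_union hdisj, pairSet_sum (by omega), tr_sum (ho h)]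
    ring
  · rw [if_neg h, Finset.union_empty, pairSet_sum (by omega)]

lemma BB_bounds {f : ℕ → ℕ} {t k q : ℕ} (hk : k < q) (ht : oif f q = 2 * t) {x : ℤ}
    (hx : x ∈ BB f t k) :
    x ≠ 0 ∧ -((OOf f q : ℤ) + 3 * t) ≤ x ∧ x ≤ (OOf f q : ℤ) + 3 * t := by
  have hOO := OOf_mono (f := f) hk
  rw [mem_BB] at hx
  rcases hx with hx | ⟨hb, hx⟩
  · rw [mem_pairSet] at hx
    push_cast at hx
    omega
  · have hoi : oif f k < 2 * t := by have := oif_mono (f := f) hk; omega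
    have := tr_bounds hoi hx
    omega

lemma BB_disj {f : ℕ → ℕ} {t k l q : ℕ} (hkl : k < l) (hl : l < q) (ht : oif f q = 2 * t) :
    Disjoint (BB f t k) (BB f t l) := by
  have hOO := OOf_mono (f := f) hkl
  rw [Finset.disjoint_left]
  intro x hx hx'
  rw [mem_BB] at hx hx'
  have hoil : bitf f l = 1 → oif f l < 2 * t := by
    intro hb; have := oif_mono (f := f) hl; omega
  have hoik : bitf f k = 1 → oif f k < 2 * t := by
    intro hb; have h1 := oif_mono (f := f) hkl; have h2 := oif_mono (f := f) hl; omega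
  rcases hx with hx | ⟨hbk, hx⟩ <;> rcases hx' with hx' | ⟨hbl, hx'⟩
  · rw [mem_pairSet] at hx hx'; push_cast at hx hx'; omega
  · rw [mem_pairSet] at hx; push_cast at hx
    have := tr_bounds (hoil hbl) hx'
    omega
  · rw [mem_pairSet] at hx'; push_cast at hx'
    have := tr_bounds (hoik hbk) hx
    omega
  · have heq := tr_inj (hoik hbk) (hoil hbl) hx hx'
    have h1 := oif_mono (f := f) hkl
    have h2 := oif_mono (f := f) hl
    omega
theorem stmt_2 (n q : ℕ) (hn : 0 < n) (hne : Even n) (r : Fin q → ℕ)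
    (hr : ∀ i, 2 ≤ r i) (hsum : ∑ i, r i = n) :
    ∃ A : Fin q → Finset ℤ,
      (∀ i j, i ≠ j → Disjoint (A i) (A j)) ∧
      (Finset.univ.biUnion A = (Finset.Icc (-((n : ℤ) / 2)) ((n : ℤ) / 2)).erase 0) ∧
      (∀ i, (A i).card = r i) ∧
      (∀ i, ∑ a ∈ A i, a = 0) := by
  classical
  set f : ℕ → ℕ := fun k => if h : k < q then r ⟨k, h⟩ else 0 with hf
  have hfr : ∀ i : Fin q, f i.val = r i := by
    intro i; simp [hf, i.isLt]
  have h2 : ∀ j < q, 2 ≤ f j := by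
    intro j hj
    have := hr ⟨j, hj⟩
    rw [← hfr ⟨j, hj⟩] at this
    exact this
  have hsum' : ∑ j ∈ Finset.range q, f j = n := by
    rw [← hsum, ← Fin.sum_univ_eq_sum_range]
    exact Finset.sum_congr rfl (fun i _ => hfr i)
  have hdec := sum_decomp h2
  obtain ⟨t, ht⟩ : ∃ t, oif f q = 2 * t := by
    rcases hne with ⟨c, hc⟩
    exact ⟨oif f q / 2, by omega⟩
  have hnM : n = 2 * (OOf f q + 3 * t) := by omega
  have ho : ∀ i : Fin q, bitf f i.val = 1 → oif f i.val < 2 * t := by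
    intro i hb
    have := oif_mono (f := f) i.isLt
    omega
  have hcard : ∀ i : Fin q, (BB f t i.val).card = r i := by
    intro i
    rw [BB_card (ho i), pcf_bitf (h2 i.val i.isLt), hfr]
  have hdisj : ∀ i j : Fin q, i ≠ j → Disjoint (BB f t i.val) (BB f t j.val) := by
    intro i j hij
    rcases lt_trichotomy i.val j.val with h | h | h
    · exact BB_disj h j.isLt ht
    · exact absurd (Fin.ext h) hij
    · exact (BB_disj h i.isLt ht).symm
  have hn2 : ((n : ℤ)) = 2 * ((OOf f q : ℤ) + 3 * t) := by exact_mod_cast hnM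
  refine ⟨fun i => BB f t i.val, hdisj, ?_, hcard, fun i => BB_sum (ho i)⟩
  apply Finset.eq_of_subset_of_card_le
  · intro x hx
    rw [Finset.mem_biUnion] at hx
    obtain ⟨i, _, hx⟩ := hx
    have hb := BB_bounds i.isLt ht hx
    rw [Finset.mem_erase, Finset.mem_Icc]
    refine ⟨hb.1, by omega, by omega⟩
  · have h0 : (0 : ℤ) ∈ Finset.Icc (-((n : ℤ) / 2)) ((n : ℤ) / 2) := by
      rw [Finset.mem_Icc]; omega
    rw [Finset.card_erase_of_mem h0, Int.card_Icc,
      Finset.card_biUnion (fun i _ j _ hij => hdisj i j hij)]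
    have : ∑ i : Fin q, (BB f t i.val).card = n := by
      rw [← hsum]
      exact Finset.sum_congr rfl (fun i _ => hcard i)
    omega
end

section
/- Let m ≡ 1 (mod 4) and n ≡ 2 (mod 4). Then the complete multipartite graph K_{n,...,n} with m equal parts of size n (i.e., K_m ∘ complement(K_n)) is orientable Z_{mn}-distance magic, with magic constant μ ≡ ((m−1)/2)·((m+1)/2)·n² (mod mn). -/
open Finset

/-- The lexicographic product `K_m ∘ complement(K_n)`, i.e. the complete
`m`-partite graph with all parts of size `n`. -/
def KmKnbar (m n : ℕ) : SimpleGraph (Fin m × Fin n) where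
  Adj a b := a.1 ≠ b.1
  symm := ⟨fun _ _ h => Ne.symm h⟩
  loopless := ⟨fun _ h => h rfl⟩

instance (m n : ℕ) : DecidableRel (KmKnbar m n).Adj :=
  fun a b => inferInstanceAs (Decidable (a.1 ≠ b.1))

theorem stmt_4 (m n : ℕ) (hm : m % 4 = 1) (hn : n % 4 = 2) :
    ∃ (D : Fin m × Fin n → Fin m × Fin n → Bool)
      (l : Fin m × Fin n → ZMod (m * n)),
      Function.Bijective l ∧
      (∀ x y, D x y → (KmKnbar m n).Adj x y) ∧
      (∀ x y, (KmKnbar m n).Adj x y → (D x y ↔ ¬ D y x)) ∧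
      ∀ x, (∑ y ∈ univ.filter (fun y => D x y), l y)
         - (∑ y ∈ univ.filter (fun y => D y x), l y)
         = ((((m - 1) / 2) * ((m + 1) / 2) * n ^ 2 : ℕ) : ZMod (m * n)) := by
  have hm1 : 1 ≤ m := by omega
  have hn1 : 1 ≤ n := by omega
  haveI : NeZero m := ⟨by omega⟩
  haveI : NeZero (m * n) := ⟨Nat.mul_ne_zero (by omega) (by omega)⟩
  set t : ℕ := (m - 1) / 2 with ht
  have hmt : m = 2 * t + 1 := by omega
  -- basic ZMod helpers
  have hz : ((m : ZMod (m*n)) * n = 0) := by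
    have h0 : ((m * n : ℕ) : ZMod (m * n)) = 0 := ZMod.natCast_self _
    push_cast at h0; exact h0
  have hcastval : ∀ z : ZMod m, ((z.val : ℕ) : ZMod m) = z := by
    intro z; simp [ZMod.natCast_val, ZMod.cast_id]
  have key : ∀ a : ℕ, n*n*a = (m*n)*(n*(a/m)) + n*n*(a%m) := by
    intro a; conv_lhs => rw [← Nat.div_add_mod a m]
    ring
  have hmod : ∀ a : ℕ, ((n * n * a : ℕ) : ZMod (m * n)) = ((n * n * (a % m) : ℕ) : ZMod (m * n)) := by
    intro a
    rw [key a]; push_cast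
    linear_combination ((n : ZMod (m*n)) * (↑(a/m))) * hz
  set δ : Fin m → Fin m → ℕ := fun a b => ((b.val : ZMod m) - (a.val : ZMod m)).val with hδ
  have hδeq : ∀ a b : Fin m, δ a b = 0 ↔ a = b := by
    intro a b
    constructor
    · intro h
      have h2 : (b.val : ZMod m) - (a.val : ZMod m) = 0 := by
        rw [← ZMod.val_eq_zero]; exact h
      have h3 : (b.val : ZMod m) = (a.val : ZMod m) := by
        linear_combination h2
      have h4 : b.val % m = a.val % m := by
        have := congrArg ZMod.val h3
        rwa [ZMod.val_natCast, ZMod.val_natCast] at this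
      rw [Nat.mod_eq_of_lt b.isLt, Nat.mod_eq_of_lt a.isLt] at h4
      exact Fin.ext h4.symm
    · intro h; subst h; simp [hδ]
  have hδsum : ∀ a b : Fin m, a ≠ b → δ a b + δ b a = m := by
    intro a b hab
    have h1 : δ a b ≠ 0 := fun h => hab ((hδeq a b).1 h)
    have hzne : (b.val : ZMod m) - (a.val : ZMod m) ≠ 0 := by
      intro h; exact h1 (by rw [hδ]; simp [h])
    have hneg : ((a.val : ZMod m) - (b.val : ZMod m)) = -((b.val : ZMod m) - (a.val : ZMod m)) := by
      ring
    have h2 : δ b a = m - δ a b := by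
      rw [hδ]; simp only
      rw [hneg, ZMod.neg_val]
      simp [hzne]
    have h3 : δ a b < m := ZMod.val_lt _
    omega
  set D : Fin m × Fin n → Fin m × Fin n → Bool :=
    fun x y => decide (1 ≤ δ x.1 y.1 ∧ δ x.1 y.1 ≤ t) with hD
  set l : Fin m × Fin n → ZMod (m*n) :=
    fun x => ((x.2.val + n * x.1.val : ℕ) : ZMod (m*n)) with hl
  have hlt : ∀ x : Fin m × Fin n, x.2.val + n * x.1.val < m * n := by
    rintro ⟨a, b⟩
    have h1 := a.isLt; have h2 := b.isLt
    simp only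
    nlinarith
  refine ⟨D, l, ?_, ?_, ?_, ?_⟩
  · -- bijective
    rw [Fintype.bijective_iff_injective_and_card]
    constructor
    · rintro x y hxy
      have hx := hlt x; have hy := hlt y
      have heq : x.2.val + n * x.1.val = y.2.val + n * y.1.val := by
        have := congrArg ZMod.val hxy
        rwa [hl, ZMod.val_cast_of_lt hx, ZMod.val_cast_of_lt hy] at this
      have h2 : x.2.val = y.2.val := by
        have hmm := congrArg (· % n) heq
        simp only [Nat.add_mul_mod_self_left] at hmm
        rwa [Nat.mod_eq_of_lt x.2.isLt, Nat.mod_eq_of_lt y.2.isLt] at hmm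
      have h1 : x.1.val = y.1.val := by
        have : n * x.1.val = n * y.1.val := by omega
        exact Nat.eq_of_mul_eq_mul_left (by omega) this
      exact Prod.ext (Fin.ext h1) (Fin.ext h2)
    · simp [ZMod.card]
  · -- D → Adj
    intro x y hxy
    simp only [hD, decide_eq_true_eq] at hxy
    show x.1 ≠ y.1
    intro h
    have : δ x.1 y.1 = 0 := (hδeq x.1 y.1).2 h
    omega
  · -- antisymmetry
    intro x y hadj
    have hne : x.1 ≠ y.1 := hadj
    have h1 : δ x.1 y.1 ≠ 0 := fun h => hne ((hδeq _ _).1 h)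
    have h2 : δ y.1 x.1 ≠ 0 := fun h => hne.symm ((hδeq _ _).1 h)
    have h3 := hδsum x.1 y.1 hne
    simp only [hD, decide_eq_true_eq]
    omega
  · -- magic constant
    rintro ⟨k, i⟩
    set toFin : ZMod m → Fin m := fun z => ⟨z.val, ZMod.val_lt z⟩ with htoFin
    have hδto : ∀ (a : Fin m) (z : ZMod m), δ a (toFin z) = (z - (a.val : ZMod m)).val := by
      intro a z; simp only [hδ, htoFin, hcastval]
    have hδto' : ∀ (z : ZMod m) (b : Fin m), δ (toFin z) b = ((b.val : ZMod m) - z).val := by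
      intro z b; simp only [hδ, htoFin, hcastval]
    have htoFinp : ∀ q : Fin m, toFin ((q.val : ℕ) : ZMod m) = q := by
      intro q
      apply Fin.ext
      show ((q.val : ℕ) : ZMod m).val = q.val
      rw [ZMod.val_natCast, Nat.mod_eq_of_lt q.isLt]
    have hsplit : ∀ (f : Fin m × Fin n → Bool) (b : Fin m → Bool), (∀ y, f y = b y.1) →
        (∑ y ∈ univ.filter (fun y => f y = true), l y)
          = ∑ p ∈ univ.filter (fun p => b p = true), ∑ j : Fin n, l (p, j) := by
      intro f b hfb
      rw [Finset.sum_filter, Finset.sum_filter, Fintype.sum_prod_type]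
      refine Finset.sum_congr rfl fun p _ => ?_
      by_cases hb : b p = true <;> simp [hfb, hb]
    have hdlt : ∀ d : ℕ, d ∈ Finset.Icc 1 t → ((d : ZMod m).val = d) := by
      intro d hd
      rw [Finset.mem_Icc] at hd
      exact ZMod.val_cast_of_lt (by omega)
    -- reindex the out-part sum
    have hout : ∀ (F : Fin m → ZMod (m*n)),
        (∑ p ∈ univ.filter (fun p => decide (1 ≤ δ k p ∧ δ k p ≤ t) = true), F p)
          = ∑ d ∈ Finset.Icc 1 t, F (toFin ((k.val : ZMod m) + (d : ℕ))) := by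
      intro F
      refine Finset.sum_nbij' (fun p => δ k p)
        (fun d => toFin ((k.val : ZMod m) + (d : ℕ))) ?_ ?_ ?_ ?_ ?_
      · intro p hp
        simp only [Finset.mem_filter, decide_eq_true_eq] at hp
        rw [Finset.mem_Icc]; exact ⟨hp.2.1, hp.2.2⟩
      · intro d hd
        simp only [Finset.mem_filter, Finset.mem_univ, true_and, decide_eq_true_eq]
        rw [hδto, add_sub_cancel_left, hdlt d hd]
        rw [Finset.mem_Icc] at hd
        exact ⟨hd.1, hd.2⟩
      · intro p hp
        have h5 : ((δ k p : ℕ) : ZMod m) = (p.val : ZMod m) - (k.val : ZMod m) :=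
          hcastval _
        show toFin ((k.val : ZMod m) + ((δ k p : ℕ) : ZMod m)) = p
        rw [h5, add_sub_cancel]
        exact htoFinp p
      · intro d hd
        show δ k (toFin ((k.val : ZMod m) + ((d : ℕ) : ZMod m))) = d
        rw [hδto, add_sub_cancel_left, hdlt d hd]
      · intro p hp
        congr 1
        have h6 : toFin ((k.val : ZMod m) + ((δ k p : ℕ) : ZMod m)) = p := by
          rw [hcastval, add_sub_cancel]; exact htoFinp p
        exact h6.symm
    -- reindex the in-part sum
    have hin : ∀ (F : Fin m → ZMod (m*n)),
        (∑ p ∈ univ.filter (fun p => decide (1 ≤ δ p k ∧ δ p k ≤ t) = true), F p)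
          = ∑ d ∈ Finset.Icc 1 t, F (toFin ((k.val : ZMod m) - (d : ℕ))) := by
      intro F
      refine Finset.sum_nbij' (fun p => δ p k)
        (fun d => toFin ((k.val : ZMod m) - (d : ℕ))) ?_ ?_ ?_ ?_ ?_
      · intro p hp
        simp only [Finset.mem_filter, decide_eq_true_eq] at hp
        rw [Finset.mem_Icc]; exact ⟨hp.2.1, hp.2.2⟩
      · intro d hd
        simp only [Finset.mem_filter, Finset.mem_univ, true_and, decide_eq_true_eq]
        rw [hδto', sub_sub_cancel, hdlt d hd]
        rw [Finset.mem_Icc] at hd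
        exact ⟨hd.1, hd.2⟩
      · intro p hp
        have h5 : ((δ p k : ℕ) : ZMod m) = (k.val : ZMod m) - (p.val : ZMod m) :=
          hcastval _
        show toFin ((k.val : ZMod m) - ((δ p k : ℕ) : ZMod m)) = p
        rw [h5, sub_sub_cancel]
        exact htoFinp p
      · intro d hd
        show δ (toFin ((k.val : ZMod m) - ((d : ℕ) : ZMod m))) k = d
        rw [hδto', sub_sub_cancel, hdlt d hd]
      · intro p hp
        congr 1
        have h6 : toFin ((k.val : ZMod m) - ((δ p k : ℕ) : ZMod m)) = p := by
          rw [hcastval, sub_sub_cancel]; exact htoFinp p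
        exact h6.symm
    -- per-part sum
    set c : ℕ := ∑ j ∈ Finset.range n, j with hc
    have hF : ∀ p : Fin m, (∑ j : Fin n, l (p, j)) = ((c + n * n * p.val : ℕ) : ZMod (m*n)) := by
      intro p
      simp only [hl]
      rw [← Nat.cast_sum]
      congr 1
      rw [Finset.sum_add_distrib, Finset.sum_const, Finset.card_univ, Fintype.card_fin,
        smul_eq_mul]
      have hcc : (∑ j : Fin n, j.val) = c := by
        rw [hc, ← Fin.sum_univ_eq_sum_range (fun j => j) n]
      rw [hcc]; ring
    rw [hsplit (fun y => D (k, i) y) (fun p => decide (1 ≤ δ k p ∧ δ k p ≤ t)) (fun y => rfl),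
        hsplit (fun y => D y (k, i)) (fun p => decide (1 ≤ δ p k ∧ δ p k ≤ t)) (fun y => rfl),
        hout, hin, ← Finset.sum_sub_distrib]
    have hterm : ∀ d ∈ Finset.Icc 1 t,
        ((∑ j : Fin n, l (toFin ((k.val : ZMod m) + (d : ℕ)), j))
          - ∑ j : Fin n, l (toFin ((k.val : ZMod m) - (d : ℕ)), j))
          = ((2 * (n * n) * d : ℕ) : ZMod (m*n)) := by
      intro d hd
      rw [Finset.mem_Icc] at hd
      have hdm : d ≤ m := by omega
      rw [hF, hF]
      have hv1 : (toFin ((k.val : ZMod m) + (d : ℕ))).val = (k.val + d) % m := by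
        simp only [htoFin]
        rw [← Nat.cast_add, ZMod.val_natCast]
      have hv2 : (toFin ((k.val : ZMod m) - (d : ℕ))).val = (k.val + (m - d)) % m := by
        simp only [htoFin]
        have hrw : (k.val : ZMod m) - (d : ℕ) = ((k.val + (m - d) : ℕ) : ZMod m) := by
          push_cast [Nat.cast_sub hdm]
          rw [ZMod.natCast_self]
          ring
        rw [hrw, ZMod.val_natCast]
      rw [hv1, hv2, Nat.cast_add, Nat.cast_add,
        ← hmod (k.val + d), ← hmod (k.val + (m - d))]
      push_cast [Nat.cast_sub hdm]
      linear_combination (-(n : ZMod (m*n))) * hz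
    rw [Finset.sum_congr rfl hterm, ← Nat.cast_sum]
    have hgauss : ∀ s : ℕ, (∑ d ∈ Finset.Icc 1 s, d) * 2 = s * (s + 1) := by
      intro s
      induction s with
      | zero => simp
      | succ s ih =>
        rw [Finset.sum_Icc_succ_top (by omega), add_mul, ih]
        ring
    have hS : (∑ d ∈ Finset.Icc 1 t, 2 * (n * n) * d) = (m - 1) / 2 * ((m + 1) / 2) * n ^ 2 := by
      rw [← Finset.mul_sum]
      have h2 : (m + 1) / 2 = t + 1 := by omega
      have h3 : (m - 1) / 2 = t := ht.symm
      rw [h2, h3]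
      calc 2 * (n * n) * (∑ d ∈ Finset.Icc 1 t, d)
          = (n * n) * ((∑ d ∈ Finset.Icc 1 t, d) * 2) := by ring
        _ = (n * n) * (t * (t + 1)) := by rw [hgauss t]
        _ = t * (t + 1) * n ^ 2 := by ring
    rw [hS]
end

section
/- For every n ≥ 3, the prism graph P_2 □ C_n (the Cartesian product of an edge with a cycle of length n) is not orientable Z_{2n}-distance magic. -/
open Finset

namespace Stmt7Aux

lemma zmod_sum_shift {M : ℕ} [NeZero M] {β : Type*} [AddCommMonoid β]
    (f : ZMod M → β) (c : ZMod M) :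
    (∑ j : ZMod M, f (j + c)) = ∑ j : ZMod M, f j :=
  Fintype.sum_equiv (Equiv.addRight c) _ _ (fun _ => rfl)

lemma step_const {M : ℕ} [NeZero M] (f : ZMod M → ℕ)
    (h : ∀ j, f (j + 1) = f j) (j : ZMod M) : f j = f 0 := by
  have key : ∀ k : ℕ, f (k : ZMod M) = f 0 := by
    intro k
    induction k with
    | zero => norm_num
    | succ k ih => rw [Nat.cast_succ, h]; exact ih
  have hv : ((j.val : ℕ) : ZMod M) = j := ZMod.natCast_rightInverse j
  rw [← hv]; exact key _

end Stmt7Aux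

theorem stmt_7 (n : ℕ) (hn : 3 ≤ n) :
    ¬ orientableDistanceMagic
        ((⊤ : SimpleGraph (Fin 2)) □ SimpleGraph.cycleGraph n) (2 * n) := by
  obtain ⟨m, rfl⟩ : ∃ m, n = m + 3 := ⟨n - 3, by omega⟩
  rintro ⟨D, l, μ, hbij, hDadj, hor, hw⟩
  classical
  haveI : NeZero (2 * (m + 3)) := ⟨by omega⟩
  haveI : NeZero (m + 3) := ⟨by omega⟩
  set G := ((⊤ : SimpleGraph (Fin 2)) □ SimpleGraph.cycleGraph (m + 3)) with hG
  -- ══════════ Step 1 : μ.val is even ══════════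
  have hsumlabel : (∑ x : Fin 2 × Fin (m+3), l x)
      = (((m+3) * (2*m+5) : ℕ) : ZMod (2*(m+3))) := by
    have h1 : (∑ x : Fin 2 × Fin (m+3), l x) = ∑ v : ZMod (2*(m+3)), v :=
      Fintype.sum_bijective l hbij _ _ (fun x => rfl)
    have h2 : (∑ v : ZMod (2*(m+3)), v)
        = ∑ k ∈ range (2*(m+3)), (k : ZMod (2*(m+3))) := by
      rw [← Fin.sum_univ_eq_sum_range (fun k => ((k:ℕ) : ZMod (2*(m+3)))) (2*(m+3))]
      exact Finset.sum_congr rfl fun v _ => (ZMod.natCast_rightInverse v).symm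
    have h3 : (∑ k ∈ range (2*(m+3)), k) = (m+3) * (2*m+5) := by
      have h4 := Finset.sum_range_id_mul_two (2*(m+3))
      have e : 2*(m+3) - 1 = 2*m+5 := by omega
      rw [e] at h4
      have h5 : (∑ k ∈ range (2*(m+3)), k) * 2 = ((m+3) * (2*m+5)) * 2 := by
        rw [h4]; ring
      exact Nat.eq_of_mul_eq_mul_right (by norm_num) h5
    rw [h1, h2, ← Nat.cast_sum, h3]
  have hμker : μ * (((m+3) * (2*m+5) : ℕ) : ZMod (2*(m+3))) = 0 := by
    have key : ∀ P : (Fin 2 × Fin (m+3)) → (Fin 2 × Fin (m+3)) → Bool,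
        (∑ x : Fin 2 × Fin (m+3), l x * (∑ y ∈ univ.filter fun y => P x y, l y))
          = ∑ x : Fin 2 × Fin (m+3), ∑ y : Fin 2 × Fin (m+3),
              if P x y then l x * l y else 0 := by
      intro P
      refine Finset.sum_congr rfl fun x _ => ?_
      rw [Finset.mul_sum, Finset.sum_filter]
    have swap : (∑ x : Fin 2 × Fin (m+3), ∑ y : Fin 2 × Fin (m+3),
          if (D y x : Bool) then l x * l y else 0)
        = ∑ x : Fin 2 × Fin (m+3), ∑ y : Fin 2 × Fin (m+3),
            if (D x y : Bool) then l x * l y else 0 := by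
      rw [Finset.sum_comm]
      refine Finset.sum_congr rfl fun x _ => Finset.sum_congr rfl fun y _ => ?_
      by_cases h : (D x y : Prop) <;> simp [h, mul_comm]
    have lhs0 : (∑ x : Fin 2 × Fin (m+3),
        l x * ((∑ y ∈ univ.filter fun y => D x y, l y)
             - (∑ y ∈ univ.filter fun y => D y x, l y))) = 0 := by
      have e1 : (∑ x : Fin 2 × Fin (m+3),
          l x * ((∑ y ∈ univ.filter fun y => D x y, l y)
               - (∑ y ∈ univ.filter fun y => D y x, l y)))
          = (∑ x : Fin 2 × Fin (m+3), l x * (∑ y ∈ univ.filter fun y => D x y, l y))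
          - (∑ x : Fin 2 × Fin (m+3), l x * (∑ y ∈ univ.filter fun y => D y x, l y)) := by
        rw [← Finset.sum_sub_distrib]
        exact Finset.sum_congr rfl fun x _ => mul_sub _ _ _
      rw [e1, key (fun x y => D x y), key (fun x y => D y x), swap, sub_self]
    have e2 : (∑ x : Fin 2 × Fin (m+3),
        l x * ((∑ y ∈ univ.filter fun y => D x y, l y)
             - (∑ y ∈ univ.filter fun y => D y x, l y)))
        = (∑ x : Fin 2 × Fin (m+3), l x) * μ := by
      rw [Finset.sum_mul]
      exact Finset.sum_congr rfl fun x _ => by rw [hw x]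
    calc μ * (((m+3) * (2*m+5) : ℕ) : ZMod (2*(m+3)))
        = (∑ x : Fin 2 × Fin (m+3), l x) * μ := by rw [hsumlabel]; exact mul_comm _ _
      _ = 0 := e2 ▸ lhs0
  have hμeven : 2 ∣ μ.val := by
    have h1 : ((μ.val * ((m+3) * (2*m+5)) : ℕ) : ZMod (2*(m+3))) = 0 := by
      rw [Nat.cast_mul, ZMod.natCast_val, ZMod.cast_id]
      exact hμker
    rw [ZMod.natCast_eq_zero_iff] at h1
    obtain ⟨k, hk⟩ := h1
    have h2 : (m+3) * (μ.val * (2*m+5)) = (m+3) * (2*k) := by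
      rw [show (m+3) * (μ.val * (2*m+5)) = μ.val * ((m+3)*(2*m+5)) from by ring, hk]
      ring
    have h3 : μ.val * (2*m+5) = 2*k := Nat.eq_of_mul_eq_mul_left (by omega) h2
    have h4 : 2*(μ.val*m) + 5*μ.val = 2*k := by rw [← h3]; ring
    omega
  -- ══════════ Step 2 : parities and vertex conditions ══════════
  have hdvd : (2 : ℕ) ∣ 2*(m+3) := ⟨m+3, rfl⟩
  set φ := ZMod.castHom hdvd (ZMod 2) with hφ
  set p : Fin 2 × Fin (m+3) → ZMod 2 := fun x => φ (l x) with hpdef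
  have hμ2 : φ μ = 0 := by
    rw [ZMod.castHom_apply, ← ZMod.natCast_val]
    obtain ⟨k, hk⟩ := hμeven
    rw [hk, Nat.cast_mul]
    have h20 : ((2:ℕ) : ZMod 2) = 0 := by decide
    rw [h20, zero_mul]
  have hvert : ∀ x, (∑ y ∈ univ.filter fun y => G.Adj x y, p y) = 0 := by
    intro x
    have h := congrArg φ (hw x)
    rw [map_sub, map_sum, map_sum, hμ2, sub_eq_zero] at h
    have split : ∀ y : Fin 2 × Fin (m+3), (if G.Adj x y then p y else 0)
        = (if D x y then p y else 0) + (if D y x then p y else 0) := by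
      intro y
      by_cases h1 : (D x y : Prop) <;> by_cases h2 : (D y x : Prop)
      · exact absurd h2 ((hor x y (hDadj x y h1)).mp h1)
      · simp [hDadj x y h1, h1, h2]
      · simp [(hDadj y x h2).symm, h1, h2]
      · by_cases hxy : G.Adj x y
        · exact absurd ((hor x y hxy).mpr h2) h1
        · simp [hxy, h1, h2]
    calc (∑ y ∈ univ.filter fun y => G.Adj x y, p y)
        = ∑ y : Fin 2 × Fin (m+3), if G.Adj x y then p y else 0 :=
          Finset.sum_filter _ _
      _ = ∑ y : Fin 2 × Fin (m+3),
            ((if D x y then p y else 0) + (if D y x then p y else 0)) :=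
          Finset.sum_congr rfl fun y _ => split y
      _ = (∑ y : Fin 2 × Fin (m+3), if D x y then p y else 0)
          + (∑ y : Fin 2 × Fin (m+3), if D y x then p y else 0) :=
          Finset.sum_add_distrib
      _ = (∑ y ∈ univ.filter fun y => D x y, p y)
          + (∑ y ∈ univ.filter fun y => D y x, p y) := by
          rw [Finset.sum_filter, Finset.sum_filter]
      _ = (∑ y ∈ univ.filter fun y => D y x, p y)
          + (∑ y ∈ univ.filter fun y => D y x, p y) := by rw [h]
      _ = 0 := CharTwo.add_self_eq_zero _
  -- ══════════ Step 3 : neighborhood structure ══════════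
  have h2ne0 : (2 : ZMod (m+3)) ≠ 0 := by
    intro h
    have h' : ((2:ℕ) : ZMod (m+3)) = 0 := by exact_mod_cast h
    rw [ZMod.natCast_eq_zero_iff] at h'
    have := Nat.le_of_dvd (by norm_num) h'
    omega
  have hne12 : ∀ j : ZMod (m+3), j - 1 ≠ j + 1 := by
    intro j h
    exact h2ne0 (by linear_combination -h)
  have hcyc : ∀ j j' : ZMod (m+3),
      (SimpleGraph.cycleGraph (m+3)).Adj j j' ↔ (j' = j - 1 ∨ j' = j + 1) := by
    intro j j'
    have h : (SimpleGraph.cycleGraph (m+3)).Adj j j' ↔ (j - j' = 1 ∨ j' - j = 1) :=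
      @SimpleGraph.cycleGraph_adj (m+1) j j'
    rw [h]
    constructor
    · rintro (h | h)
      · left; linear_combination -h
      · right; linear_combination h
    · rintro (h | h)
      · left; linear_combination -h
      · right; linear_combination h
  have hsplit2 : ∀ (c d : ZMod (m+3)) (f : ZMod (m+3) → ZMod 2), c ≠ d →
      (∑ j' : ZMod (m+3), if j' = c ∨ j' = d then f j' else 0) = f c + f d := by
    intro c d f hcd
    have e : ∀ j' : ZMod (m+3), (if j' = c ∨ j' = d then f j' else 0)
        = (if j' = c then f j' else 0) + (if j' = d then f j' else 0) := by
      intro j'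
      by_cases h1 : j' = c <;> by_cases h2 : j' = d
      · exact absurd (h1.symm.trans h2) hcd
      · simp [h1, h2, hcd, hcd.symm]
      · simp [h1, h2, hcd, hcd.symm]
      · simp [h1, h2]
    rw [Finset.sum_congr rfl fun j' _ => e j', Finset.sum_add_distrib,
      Finset.sum_ite_eq' univ c f, Finset.sum_ite_eq' univ d f,
      if_pos (mem_univ c), if_pos (mem_univ d)]
  obtain ⟨a, ha⟩ : ∃ a : ZMod (m+3) → ZMod 2, ∀ j, a j = p (0, j) :=
    ⟨_, fun _ => rfl⟩
  obtain ⟨b, hbd⟩ : ∃ b : ZMod (m+3) → ZMod 2, ∀ j, b j = p (1, j) :=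
    ⟨_, fun _ => rfl⟩
  have hnbr : ∀ (i₀ i₁ : Fin 2) (q₀ q₁ : ZMod (m+3) → ZMod 2), i₀ ≠ i₁ →
      (∀ j, q₀ j = p (i₀, j)) → (∀ j, q₁ j = p (i₁, j)) →
      ∀ j : ZMod (m+3),
      (∑ y ∈ univ.filter fun y => G.Adj (i₀, j) y, p y)
        = q₀ (j-1) + q₀ (j+1) + q₁ j := by
    intro i₀ i₁ q₀ q₁ hne hq₀ hq₁ j
    have hAsame : ∀ j' : ZMod (m+3), G.Adj (i₀, j) (i₀, j') ↔ (j' = j - 1 ∨ j' = j + 1) := by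
      intro j'
      rw [hG, SimpleGraph.boxProd_adj]
      simp only [SimpleGraph.top_adj, ne_eq, not_true_eq_false, false_and, false_or,
        and_true, not_false_eq_true]
      exact hcyc j j'
    have hAdiff : ∀ j' : ZMod (m+3), G.Adj (i₀, j) (i₁, j') ↔ j = j' := by
      intro j'
      rw [hG, SimpleGraph.boxProd_adj]
      simp only [SimpleGraph.top_adj]
      constructor
      · rintro (⟨_, h⟩ | ⟨_, h⟩)
        · exact h
        · exact absurd h hne
      · intro h; exact Or.inl ⟨hne, h⟩
    have huniv : (univ : Finset (Fin 2)) = {i₀, i₁} := by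
      fin_cases i₀ <;> fin_cases i₁ <;> first | (exact absurd rfl hne) | decide
    calc (∑ y ∈ univ.filter fun y => G.Adj (i₀,j) y, p y)
        = ∑ y : Fin 2 × Fin (m+3), if G.Adj (i₀,j) y then p y else 0 :=
          Finset.sum_filter _ _
      _ = ∑ i : Fin 2, ∑ j' : Fin (m+3), if G.Adj (i₀,j) (i,j') then p (i,j') else 0 :=
          Fintype.sum_prod_type _
      _ = (∑ j' : Fin (m+3), if G.Adj (i₀,j) (i₀,j') then p (i₀,j') else 0)
          + (∑ j' : Fin (m+3), if G.Adj (i₀,j) (i₁,j') then p (i₁,j') else 0) := by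
          rw [huniv, Finset.sum_insert (by simp [hne]), Finset.sum_singleton]
      _ = q₀ (j-1) + q₀ (j+1) + q₁ j := by
          have t1 : (∑ j' : Fin (m+3), if G.Adj (i₀,j) (i₀,j') then p (i₀,j') else 0)
              = p (i₀, ((j-1 : ZMod (m+3)) : Fin (m+3))) + p (i₀, ((j+1 : ZMod (m+3)) : Fin (m+3))) := by
            exact (Finset.sum_congr rfl fun j' _ =>
              if_congr (hAsame j') rfl rfl).trans (hsplit2 (j-1) (j+1) (fun j' => p (i₀, j')) (hne12 j))
          have t2 : (∑ j' : Fin (m+3), if G.Adj (i₀,j) (i₁,j') then p (i₁,j') else 0)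
              = p (i₁, (j : Fin (m+3))) := by
            refine (Finset.sum_congr rfl fun j' _ =>
              if_congr (hAdiff j') rfl rfl).trans ?_
            have e := Finset.sum_ite_eq (univ : Finset (ZMod (m+3))) j (fun j' => p (i₁, j'))
            exact e.trans (if_pos (mem_univ j))
          rw [t1, t2, hq₀ (j-1), hq₀ (j+1), hq₁ j]
  have hrow0 : ∀ j : ZMod (m+3), a (j-1) + a (j+1) + b j = 0 := by
    intro j
    rw [← hnbr 0 1 a b (by decide) ha hbd j]
    exact hvert (0, j)
  have hrow1 : ∀ j : ZMod (m+3), b (j-1) + b (j+1) + a j = 0 := by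
    intro j
    rw [← hnbr 1 0 b a (by decide) hbd ha j]
    exact hvert (1, j)
  -- ══════════ Step 4 : Fibonacci relation ══════════
  have htwo : (2 : ZMod 2) = 0 := by decide
  have hbeq : ∀ j, b j = a (j-1) + a (j+1) := by
    intro j; linear_combination hrow0 j - (a (j-1) + a (j+1)) * htwo
  have hF : ∀ j : ZMod (m+3), a (j+2) + a j + a (j-2) = 0 := by
    intro j
    have E3 := hrow1 j
    have E1 := hbeq (j-1)
    have E2 := hbeq (j+1)
    rw [show j - 1 - 1 = j - 2 from by ring, show j - 1 + 1 = j from by ring] at E1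
    rw [show j + 1 - 1 = j from by ring, show j + 1 + 1 = j + 2 from by ring] at E2
    linear_combination E3 - E1 - E2 - (a j) * htwo
  -- ══════════ Step 5 : counting ══════════
  set A := ∑ j : ZMod (m+3), (a j).val with hAdef
  set B := ∑ j : ZMod (m+3), (b j).val with hBdef
  set C := ∑ j : ZMod (m+3), (a j).val * (a (j+2)).val with hCdef
  have hhalf : (∑ v : ZMod (2*(m+3)), (φ v).val) = m+3 := by
    have h1 : (∑ v : ZMod (2*(m+3)), (φ (v+1)).val)
        = ∑ v : ZMod (2*(m+3)), (φ v).val :=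
      Stmt7Aux.zmod_sum_shift (fun v => (φ v).val) 1
    have h2 : (∑ v : ZMod (2*(m+3)), (φ v).val)
        + (∑ v : ZMod (2*(m+3)), (φ v).val) = 2*(m+3) := by
      nth_rewrite 2 [← h1]
      rw [← Finset.sum_add_distrib]
      have e : ∀ v : ZMod (2*(m+3)), (φ v).val + (φ (v+1)).val = 1 := by
        intro v
        rw [map_add, map_one]
        exact (by decide : ∀ u : ZMod 2, u.val + (u+1).val = 1) (φ v)
      rw [Finset.sum_congr rfl fun v _ => e v, Finset.sum_const, Finset.card_univ,
        ZMod.card, smul_eq_mul, mul_one]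
    omega
  have cnt1 : A + B = m + 3 := by
    have h1 : (∑ x : Fin 2 × Fin (m+3), (p x).val)
        = ∑ v : ZMod (2*(m+3)), (φ v).val :=
      Fintype.sum_bijective l hbij _ _ (fun x => rfl)
    have h2 : (∑ x : Fin 2 × Fin (m+3), (p x).val) = A + B := by
      rw [Fintype.sum_prod_type, Fin.sum_univ_two, hAdef, hBdef]
      have e0 : (∑ j : ZMod (m+3), (a j).val) = ∑ j' : Fin (m+3), (p (0, j')).val := by
        apply Finset.sum_congr rfl
        intro j _
        rw [ha]
      have e1 : (∑ j : ZMod (m+3), (b j).val) = ∑ j' : Fin (m+3), (p (1, j')).val := by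
        apply Finset.sum_congr rfl
        intro j _
        rw [hbd]
      rw [e0, e1]
    omega
  have cnt2 : B + 2*C = A + A := by
    have pt : ∀ j, (b j).val + 2*((a (j-1)).val * (a (j+1)).val)
        = (a (j-1)).val + (a (j+1)).val := by
      intro j
      exact (by decide : ∀ u v w : ZMod 2, u = v + w →
        u.val + 2*(v.val*w.val) = v.val + w.val) _ _ _ (hbeq j)
    have e1 : (∑ j : ZMod (m+3), ((b j).val + 2*((a (j-1)).val * (a (j+1)).val)))
        = ∑ j : ZMod (m+3), ((a (j-1)).val + (a (j+1)).val) :=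
      Finset.sum_congr rfl fun j _ => pt j
    rw [Finset.sum_add_distrib, Finset.sum_add_distrib, ← Finset.mul_sum] at e1
    have s1 : (∑ j : ZMod (m+3), (a (j-1)).val) = A := by
      rw [← Stmt7Aux.zmod_sum_shift (fun j => (a (j-1)).val) 1]
      apply Finset.sum_congr rfl; intro j _
      rw [show j + 1 - 1 = j from by ring]
    have s2 : (∑ j : ZMod (m+3), (a (j+1)).val) = A := by
      rw [← Stmt7Aux.zmod_sum_shift (fun j => (a (j+1)).val) (-1)]
      apply Finset.sum_congr rfl; intro j _
      rw [show j + -1 + 1 = j from by ring]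
    have s3 : (∑ j : ZMod (m+3), (a (j-1)).val * (a (j+1)).val) = C := by
      rw [← Stmt7Aux.zmod_sum_shift (fun j => (a (j-1)).val * (a (j+1)).val) 1]
      rw [hCdef]
      apply Finset.sum_congr rfl; intro j _
      rw [show j + 1 - 1 = j from by ring, show j + 1 + 1 = j + 2 from by ring]
    rw [s1, s2, s3] at e1
    omega
  have cnt3 : A = C + C := by
    have pt : ∀ j, (a j).val
        = (a j).val * (a (j-2)).val + (a j).val * (a (j+2)).val := by
      intro j
      exact (by decide : ∀ x y z : ZMod 2, x + y + z = 0 →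
        y.val = y.val*z.val + y.val*x.val) _ _ _ (hF j)
    have e1 : (∑ j : ZMod (m+3), (a j).val)
        = ∑ j : ZMod (m+3), ((a j).val * (a (j-2)).val + (a j).val * (a (j+2)).val) :=
      Finset.sum_congr rfl fun j _ => pt j
    rw [Finset.sum_add_distrib] at e1
    have s4 : (∑ j : ZMod (m+3), (a j).val * (a (j-2)).val) = C := by
      rw [← Stmt7Aux.zmod_sum_shift (fun j => (a j).val * (a (j-2)).val) 2]
      rw [hCdef]
      apply Finset.sum_congr rfl; intro j _
      rw [show j + 2 - 2 = j from by ring, Nat.mul_comm]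
    rw [s4] at e1
    exact e1
  -- ══════════ Step 6 : window analysis and contradiction ══════════
  obtain ⟨w, hwd⟩ : ∃ w : ZMod (m+3) → ℕ,
      ∀ j, w j = (a j).val + (a (j+2)).val + (a (j+4)).val := ⟨_, fun _ => rfl⟩
  have hF' : ∀ j : ZMod (m+3), a (j+4) + a (j+2) + a j = 0 := by
    intro j
    have h := hF (j+2)
    rwa [show j + 2 + 2 = j + 4 from by ring, show j + 2 - 2 = j from by ring] at h
  have hw02 : ∀ j, w j = 0 ∨ w j = 2 := by
    intro j
    rw [hwd]
    exact (by decide : ∀ x y z : ZMod 2, x + y + z = 0 →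
      (z.val + y.val + x.val = 0 ∨ z.val + y.val + x.val = 2)) _ _ _ (hF' j)
  have hvz : ∀ u : ZMod 2, u.val = 0 → u = 0 := by decide
  have hstep0 : ∀ j, w j = 0 → w (j+2) = 0 := by
    intro j h
    rw [hwd] at h
    have h0 : a j = 0 := hvz _ (by omega)
    have h2 : a (j+2) = 0 := hvz _ (by omega)
    have h4 : a (j+4) = 0 := hvz _ (by omega)
    have h6 : a (j+6) = 0 := by
      have hf := hF' (j+2)
      rw [show j + 2 + 4 = j + 6 from by ring, show j + 2 + 2 = j + 4 from by ring,
        h2, h4] at hf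
      linear_combination hf
    rw [hwd, show j + 2 + 2 = j + 4 from by ring, show j + 2 + 4 = j + 6 from by ring,
      h2, h4, h6]
    rfl
  have hstep0' : ∀ j, w (j+2) = 0 → w j = 0 := by
    intro j h
    rw [hwd, show j + 2 + 2 = j + 4 from by ring, show j + 2 + 4 = j + 6 from by ring] at h
    have h2 : a (j+2) = 0 := hvz _ (by omega)
    have h4 : a (j+4) = 0 := hvz _ (by omega)
    have h0 : a j = 0 := by
      have hf := hF' j
      rw [h2, h4] at hf
      linear_combination hf
    rw [hwd, h0, h2, h4]
    rfl
  have hstep : ∀ j, w (j+2) = w j := by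
    intro j
    rcases hw02 j with h | h
    · rw [hstep0 j h, h]
    · rcases hw02 (j+2) with h' | h'
      · exact absurd (hstep0' j h') (by omega)
      · rw [h', h]
  have hsumw : (∑ j : ZMod (m+3), w j) = 3 * A := by
    have e : (∑ j : ZMod (m+3), w j)
        = ∑ j : ZMod (m+3), ((a j).val + (a (j+2)).val + (a (j+4)).val) :=
      Finset.sum_congr rfl fun j _ => hwd j
    rw [e, Finset.sum_add_distrib, Finset.sum_add_distrib,
      Stmt7Aux.zmod_sum_shift (fun j => (a j).val) 2,
      Stmt7Aux.zmod_sum_shift (fun j => (a j).val) 4, ← hAdef]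
    ring
  have hvconst : ∀ j : ZMod (m+3), w j + w (j+1) = w 0 + w (0+1) := by
    intro j
    exact Stmt7Aux.step_const (fun j => w j + w (j+1))
      (fun j => by
        show w (j+1) + w (j+1+1) = w j + w (j+1)
        rw [show j + 1 + 1 = j + 2 from by ring, hstep j, Nat.add_comm]) j
  have htot : (m+3) * (w 0 + w (0+1)) = (m+3) * 3 := by
    have e1 : (∑ j : ZMod (m+3), (w j + w (j+1))) = (m+3) * (w 0 + w (0+1)) := by
      rw [Finset.sum_congr rfl fun j _ => hvconst j, Finset.sum_const,
        Finset.card_univ, ZMod.card, smul_eq_mul]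
    have e2 : (∑ j : ZMod (m+3), (w j + w (j+1))) = 3*A + 3*A := by
      rw [Finset.sum_add_distrib, Stmt7Aux.zmod_sum_shift w 1, hsumw]
    have h6A : 3*A + 3*A = (m+3)*3 := by omega
    rw [← e1, e2, h6A]
  have hval3 : w 0 + w (0+1) = 3 := Nat.eq_of_mul_eq_mul_left (by omega) htot
  rcases hw02 0 with h0 | h0 <;> rcases hw02 (0+1) with h1 | h1 <;> omega
end
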